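/- Let R be a semisimple ring, C a strongly graded connected R-coring, and f : C → D a morphism of graded R-corings such that the homogeneous components f_0 and f_1 are injective. Then f is injective. -/

import Mathlib

noncomputable section
open MulOpposite
open scoped DirectSum

namespace P1605

--CHUNK_T_BEGIN

section TensorR

variable (R : Type) [Ring R]
variable (M N : Type) [AddCommGroup M] [AddCommGroup N] [Module Rᵐᵒᵖ M] [Module R N]

/-- The subgroup of the `ℤ`-tensor product by which one quotients to obtain the
balanced tensor product `M ⊗_R N` of a right `R`-module and a left `R`-module. -/
def trel : Submodule ℤ (TensorProduct ℤ M N) :=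
  Submodule.span ℤ {x | ∃ (r : R) (m : M) (n : N),
    x = (op r • m) ⊗ₜ[ℤ] n - m ⊗ₜ[ℤ] (r • n)}

/-- The tensor product `M ⊗_R N` over a (possibly noncommutative) ring `R`,
of a right `R`-module `M` and a left `R`-module `N`. -/
def TensorR : Type := TensorProduct ℤ M N ⧸ trel R M N

instance : AddCommGroup (TensorR R M N) :=
  inferInstanceAs (AddCommGroup (TensorProduct ℤ M N ⧸ trel R M N))

variable {R M N}

/-- The canonical balanced biadditive map `M × N → M ⊗_R N`, `(m, n) ↦ m ⊗ n`. -/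
def tp (m : M) (n : N) : TensorR R M N := Submodule.Quotient.mk (m ⊗ₜ[ℤ] n)

theorem tp_add_left (m m' : M) (n : N) :
    tp (R := R) (m + m') n = tp m n + tp m' n := by
  show Submodule.Quotient.mk _ = Submodule.Quotient.mk _ + Submodule.Quotient.mk _
  rw [TensorProduct.add_tmul]; exact Submodule.Quotient.mk_add _

theorem tp_add_right (m : M) (n n' : N) :
    tp (R := R) m (n + n') = tp m n + tp m n' := by
  show Submodule.Quotient.mk _ = Submodule.Quotient.mk _ + Submodule.Quotient.mk _
  rw [TensorProduct.tmul_add]; exact Submodule.Quotient.mk_add _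

@[simp] theorem tp_zero_left (n : N) : tp (R := R) (0 : M) n = 0 := by
  show Submodule.Quotient.mk _ = _
  rw [TensorProduct.zero_tmul]; exact Submodule.Quotient.mk_eq_zero _ |>.2 (zero_mem _)

@[simp] theorem tp_zero_right (m : M) : tp (R := R) m (0 : N) = 0 := by
  show Submodule.Quotient.mk _ = _
  rw [TensorProduct.tmul_zero]; exact Submodule.Quotient.mk_eq_zero _ |>.2 (zero_mem _)

/-- The balance relation `(m · r) ⊗ n = m ⊗ (r · n)`. -/
theorem tp_balance (r : R) (m : M) (n : N) :
    tp (R := R) (op r • m) n = tp m (r • n) :=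
  (Submodule.Quotient.eq _).2 (Submodule.subset_span ⟨r, m, n, rfl⟩)

theorem tp_neg_left (m : M) (n : N) : tp (R := R) (-m) n = - tp m n := by
  have := tp_add_left (R := R) m (-m) n
  rw [add_neg_cancel, tp_zero_left] at this
  exact eq_neg_of_add_eq_zero_right this.symm

end TensorR

section TensorR

variable {R : Type} [Ring R]
variable {M N : Type} [AddCommGroup M] [AddCommGroup N] [Module Rᵐᵒᵖ M] [Module R N]
variable {P : Type} [AddCommGroup P]

/-- Universal property: a balanced biadditive map lifts to the tensor product. -/
def liftT (f : M →+ N →+ P)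
    (hf : ∀ (r : R) (m : M) (n : N), f (op r • m) n = f m (r • n)) :
    TensorR R M N →+ P :=
  ((trel R M N).liftQ
    (TensorProduct.lift (LinearMap.mk₂ ℤ (fun m n => f m n)
      (fun m m' n => by simp)
      (fun z m n => by simp)
      (fun m n n' => by simp)
      (fun z m n => by simp)))
    (by
      rw [trel, Submodule.span_le]
      rintro x ⟨r, m, n, rfl⟩
      exact LinearMap.mem_ker.2 (by erw [map_sub, TensorProduct.lift.tmul, TensorProduct.lift.tmul]; simp [hf r m n]))).toAddMonoidHom

@[simp] theorem liftT_tp (f : M →+ N →+ P)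
    (hf : ∀ (r : R) (m : M) (n : N), f (op r • m) n = f m (r • n)) (m : M) (n : N) :
    liftT f hf (tp m n) = f m n := rfl

theorem TensorR.ind {motive : TensorR R M N → Prop} (z : TensorR R M N)
    (h0 : motive 0) (htp : ∀ m n, motive (tp m n))
    (hadd : ∀ x y, motive x → motive y → motive (x + y)) : motive z := by
  obtain ⟨w, rfl⟩ := Submodule.Quotient.mk_surjective _ z
  induction w using TensorProduct.induction_on with
  | zero =>
      have : (Submodule.Quotient.mk (0 : TensorProduct ℤ M N) : TensorR R M N) = 0 :=
        (Submodule.Quotient.mk_eq_zero _).2 (zero_mem _)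
      rw [this]; exact h0
  | tmul m n => exact htp m n
  | add x y hx hy =>
      rw [Submodule.Quotient.mk_add]
      exact hadd _ _ hx hy

theorem TensorR.addHom_ext {f g : TensorR R M N →+ P}
    (h : ∀ m n, f (tp m n) = g (tp m n)) : f = g := by
  ext z
  induction z using TensorR.ind with
  | h0 => simp
  | htp m n => exact h m n
  | hadd x y hx hy => simp [hx, hy]

variable {M' N' : Type} [AddCommGroup M'] [AddCommGroup N'] [Module Rᵐᵒᵖ M'] [Module R N']

/-- Functoriality of the tensor product in both arguments, for equivariant additive maps. -/
def mapT (f : M →+ M') (g : N →+ N')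
    (hf : ∀ (r : R) (m : M), f (op r • m) = op r • f m)
    (hg : ∀ (r : R) (n : N), g (r • n) = r • g n) :
    TensorR R M N →+ TensorR R M' N' :=
  liftT (P := TensorR R M' N')
    (AddMonoidHom.mk' (fun m => AddMonoidHom.mk' (fun n => tp (R := R) (f m) (g n))
        (fun n n' => by (try dsimp only); rw [map_add, tp_add_right]))
      (fun m m' => by
        ext n
        show tp (R := R) (f (m + m')) (g n) = tp (f m) (g n) + tp (f m') (g n)
        rw [map_add, tp_add_left]))
    (fun r m n => by
      show tp (f (op r • m)) (g n) = tp (f m) (g (r • n))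
      rw [hf, hg]; exact tp_balance r (f m) (g n))

@[simp] theorem mapT_tp (f : M →+ M') (g : N →+ N')
    (hf : ∀ (r : R) (m : M), f (op r • m) = op r • f m)
    (hg : ∀ (r : R) (n : N), g (r • n) = r • g n) (m : M) (n : N) :
    mapT f g hf hg (tp m n) = tp (f m) (g n) := rfl

/-- A convenient unbundled version of the universal property. -/
def liftT₂ (f : M → N → P)
    (h1 : ∀ m m' n, f (m + m') n = f m n + f m' n)
    (h2 : ∀ m n n', f m (n + n') = f m n + f m n')
    (hb : ∀ (r : R) m n, f (op r • m) n = f m (r • n)) : TensorR R M N →+ P :=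
  liftT (AddMonoidHom.mk' (fun m => AddMonoidHom.mk' (f m) (h2 m))
    (fun m m' => AddMonoidHom.ext fun n => h1 m m' n)) hb

@[simp] theorem liftT₂_tp (f : M → N → P) (h1 : ∀ m m' n, f (m + m') n = f m n + f m' n)
    (h2 : ∀ m n n', f m (n + n') = f m n + f m n')
    (hb : ∀ (r : R) m n, f (op r • m) n = f m (r • n)) (m : M) (n : N) :
    liftT₂ f h1 h2 hb (tp m n) = f m n := rfl

end TensorR

section Modules

variable {R : Type} [Ring R]
variable {M N : Type} [AddCommGroup M] [AddCommGroup N] [Module Rᵐᵒᵖ M] [Module R N]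

section Left
variable [Module R M] [SMulCommClass R Rᵐᵒᵖ M]

/-- Left `R`-action on the tensor product, through the left factor. -/
def lsmT (r : R) : TensorR R M N →+ TensorR R M N :=
  mapT (DistribMulAction.toAddMonoidHom M r) (AddMonoidHom.id N)
    (fun s m => smul_comm r (op s) m) (fun _ _ => rfl)

instance instModLeftTensorR : Module R (TensorR R M N) where
  smul r z := lsmT r z
  one_smul z := by
    show lsmT 1 z = z
    induction z using TensorR.ind with
    | h0 => simp
    | htp m n => show tp ((1:R) • m) n = tp m n; rw [one_smul]
    | hadd x y hx hy => rw [map_add, hx, hy]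
  mul_smul r s z := by
    show lsmT (r * s) z = lsmT r (lsmT s z)
    induction z using TensorR.ind with
    | h0 => simp
    | htp m n => show tp ((r * s) • m) n = tp (r • s • m) n; rw [mul_smul]
    | hadd x y hx hy => simp only [map_add, hx, hy]
  smul_zero r := by show lsmT r 0 = 0; simp
  smul_add r x y := by show lsmT r (x + y) = lsmT r x + lsmT r y; simp
  add_smul r s z := by
    show lsmT (r + s) z = lsmT r z + lsmT s z
    induction z using TensorR.ind with
    | h0 => simp
    | htp m n =>
        show tp ((r + s) • m) n = tp (r • m) n + tp (s • m) n
        rw [add_smul, tp_add_left]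
    | hadd x y hx hy =>
        rw [map_add, hx, hy, map_add, map_add]; abel
  zero_smul z := by
    show lsmT 0 z = 0
    induction z using TensorR.ind with
    | h0 => simp
    | htp m n => show tp ((0:R) • m) n = 0; rw [zero_smul, tp_zero_left]
    | hadd x y hx hy => rw [map_add, hx, hy, add_zero]

@[simp] theorem lsm_tp (r : R) (m : M) (n : N) :
    r • (tp (R := R) m n : TensorR R M N) = tp (r • m) n := rfl

end Left

section Right
variable [Module Rᵐᵒᵖ N] [SMulCommClass R Rᵐᵒᵖ N]

/-- Right `R`-action on the tensor product, through the right factor. -/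
def rsmT (s : Rᵐᵒᵖ) : TensorR R M N →+ TensorR R M N :=
  mapT (AddMonoidHom.id M) (DistribMulAction.toAddMonoidHom N s)
    (fun _ _ => rfl) (fun r n => (smul_comm r s n).symm)

instance instModRightTensorR : Module Rᵐᵒᵖ (TensorR R M N) where
  smul s z := rsmT s z
  one_smul z := by
    show rsmT 1 z = z
    induction z using TensorR.ind with
    | h0 => simp
    | htp m n => show tp m ((1:Rᵐᵒᵖ) • n) = tp m n; rw [one_smul]
    | hadd x y hx hy => rw [map_add, hx, hy]
  mul_smul r s z := by
    show rsmT (r * s) z = rsmT r (rsmT s z)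
    induction z using TensorR.ind with
    | h0 => simp
    | htp m n => show tp m ((r * s) • n) = tp m (r • s • n); rw [mul_smul]
    | hadd x y hx hy => simp only [map_add, hx, hy]
  smul_zero r := by show rsmT r 0 = 0; simp
  smul_add r x y := by show rsmT r (x + y) = rsmT r x + rsmT r y; simp
  add_smul r s z := by
    show rsmT (r + s) z = rsmT r z + rsmT s z
    induction z using TensorR.ind with
    | h0 => simp
    | htp m n =>
        show tp m ((r + s) • n) = tp m (r • n) + tp m (s • n)
        rw [add_smul, tp_add_right]
    | hadd x y hx hy => rw [map_add, hx, hy, map_add, map_add]; abel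
  zero_smul z := by
    show rsmT 0 z = 0
    induction z using TensorR.ind with
    | h0 => simp
    | htp m n => show tp m ((0:Rᵐᵒᵖ) • n) = 0; rw [zero_smul, tp_zero_right]
    | hadd x y hx hy => rw [map_add, hx, hy, add_zero]

@[simp] theorem rsm_tp (s : Rᵐᵒᵖ) (m : M) (n : N) :
    s • (tp (R := R) m n : TensorR R M N) = tp m (s • n) := rfl

end Right

instance instSMulCommTensorR [Module R M] [SMulCommClass R Rᵐᵒᵖ M]
    [Module Rᵐᵒᵖ N] [SMulCommClass R Rᵐᵒᵖ N] :
    SMulCommClass R Rᵐᵒᵖ (TensorR R M N) where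
  smul_comm r s z := by
    induction z using TensorR.ind with
    | h0 => simp
    | htp m n => rw [rsm_tp, lsm_tp, lsm_tp, rsm_tp]
    | hadd x y hx hy => simp only [smul_add, hx, hy]

end Modules

section Assoc

variable {R : Type} [Ring R]
variable {M N P : Type} [AddCommGroup M] [AddCommGroup N] [AddCommGroup P]
variable [Module Rᵐᵒᵖ M]
variable [Module R N] [Module Rᵐᵒᵖ N] [SMulCommClass R Rᵐᵒᵖ N]
variable [Module R P]

/-- The associator `(M ⊗_R N) ⊗_R P → M ⊗_R (N ⊗_R P)`. -/
def assocT : TensorR R (TensorR R M N) P →+ TensorR R M (TensorR R N P) :=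
  liftT (P := TensorR R M (TensorR R N P))
    (liftT (P := P →+ TensorR R M (TensorR R N P))
      (AddMonoidHom.mk' (fun m => AddMonoidHom.mk'
          (fun n => AddMonoidHom.mk' (fun p => tp (R := R) m (tp (R := R) n p))
            (fun p p' => by (try dsimp only); rw [tp_add_right, tp_add_right]))
          (fun n n' => by
            ext p
            show tp (R := R) m (tp (R := R) (n + n') p) = tp m (tp n p) + tp m (tp n' p)
            rw [tp_add_left, tp_add_right]))
        (fun m m' => by
          ext n p
          show tp (R := R) (m + m') (tp (R := R) n p)
              = tp m (tp n p) + tp m' (tp n p)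
          rw [tp_add_left]))
      (fun r m n => by
        ext p
        show tp (R := R) (op r • m) (tp (R := R) n p) = tp m (tp (r • n) p)
        rw [tp_balance, lsm_tp]))
    (fun r x p => by
      induction x using TensorR.ind with
      | h0 => simp
      | htp m n =>
          rw [rsm_tp]
          show tp (R := R) m (tp (R := R) (op r • n) p) = tp m (tp n (r • p))
          rw [tp_balance]
      | hadd x y hx hy =>
          simp only [smul_add, map_add, AddMonoidHom.add_apply, hx, hy])

@[simp] theorem assocT_tp (m : M) (n : N) (p : P) :
    assocT (R := R) (tp (tp m n) p) = tp m (tp n p) := rfl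

/-- The associator `M ⊗_R (N ⊗_R P) → (M ⊗_R N) ⊗_R P`. -/
def assocT' : TensorR R M (TensorR R N P) →+ TensorR R (TensorR R M N) P :=
  liftT (P := TensorR R (TensorR R M N) P)
    (AddMonoidHom.mk'
      (fun m => liftT (P := TensorR R (TensorR R M N) P)
        (AddMonoidHom.mk' (fun n => AddMonoidHom.mk'
            (fun p => tp (R := R) (tp (R := R) m n) p)
            (fun p p' => by (try dsimp only); rw [tp_add_right]))
          (fun n n' => by
            ext p
            show tp (R := R) (tp (R := R) m (n + n')) p
                = tp (tp m n) p + tp (tp m n') p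
            rw [tp_add_right, tp_add_left]))
        (fun r n p => by
          show tp (R := R) (tp (R := R) m (op r • n)) p = tp (tp m n) (r • p)
          rw [show tp (R := R) m (op r • n) = op r • tp (R := R) m n from
            (rsm_tp _ _ _).symm, tp_balance]))
      (fun m m' => by
        apply TensorR.addHom_ext (R := R)
        intro n p
        show tp (R := R) (tp (R := R) (m + m') n) p
            = tp (tp m n) p + tp (tp m' n) p
        rw [tp_add_left, tp_add_left]))
    (fun r m w => by
      induction w using TensorR.ind with
      | h0 => simp
      | htp n p =>
          show tp (R := R) (tp (R := R) (op r • m) n) p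
              = tp (R := R) (tp (R := R) m (r • n)) p
          rw [tp_balance (R := R) r m n]
      | hadd x y hx hy => rw [smul_add, map_add, hx, hy, map_add])

@[simp] theorem assocT'_tp (m : M) (n : N) (p : P) :
    assocT' (R := R) (tp m (tp n p)) = tp (tp m n) p := rfl

end Assoc

/-- Transport of an additive group along an equality of indices in a family. -/
def fcast {α : Sort*} (F : α → Type) [∀ x, AddCommGroup (F x)] {a b : α} (h : a = b) :
    F a ≃+ F b := by subst h; exact AddEquiv.refl _

@[simp] theorem fcast_rfl {α : Sort*} (F : α → Type) [∀ x, AddCommGroup (F x)] (a : α)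
    (x : F a) : fcast F (rfl : a = a) x = x := rfl

--CHUNK_T_END

--CHUNK_C_BEGIN
section Corings

variable {R : Type} [Ring R]

section Collapse

variable {M C0 : Type} [AddCommGroup M] [AddCommGroup C0]

/-- Collapsing `M ⊗_R C_0 → M` along an identification `ε : C_0 ≅ R`. -/
def rcollapse [Module Rᵐᵒᵖ M] [Module R C0] (e : C0 →+ R)
    (he : ∀ (r : R) (y : C0), e (r • y) = r * e y) : TensorR R M C0 →+ M :=
  liftT₂ (fun m y => (op (e y) : Rᵐᵒᵖ) • m)
    (fun m m' y => smul_add _ m m')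
    (fun m y y' => by (try dsimp only); rw [map_add, ← add_smul, op_add])
    (fun r m y => by
      try dsimp only
      rw [← mul_smul, he, ← op_mul])

/-- Collapsing `C_0 ⊗_R M → M` along an identification `ε : C_0 ≅ R`. -/
def lcollapse [Module R M] [Module Rᵐᵒᵖ C0] (e : C0 →+ R)
    (he : ∀ (s : Rᵐᵒᵖ) (y : C0), e (s • y) = e y * s.unop) : TensorR R C0 M →+ M :=
  liftT₂ (fun y m => e y • m)
    (fun y y' m => by (try dsimp only); rw [map_add, ← add_smul])
    (fun y m m' => smul_add _ m m')
    (fun r y m => by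
      try dsimp only
      rw [he, ← mul_smul, unop_op])

end Collapse

variable (R)

/-- A connected graded `R`-coring: a positively graded coalgebra in the monoidal
category of `R`-bimodules whose degree-zero component is `R` itself (via the
counit isomorphism `ε`). -/
structure ConnCoring where
  C : ℕ → Type
  [acg : ∀ n, AddCommGroup (C n)]
  [modL : ∀ n, Module R (C n)]
  [modR : ∀ n, Module Rᵐᵒᵖ (C n)]
  [scomm : ∀ n, SMulCommClass R Rᵐᵒᵖ (C n)]
  Δ : ∀ p q, C (p + q) →+ TensorR R (C p) (C q)
  Δ_lsmul : ∀ (p q : ℕ) (r : R) (x : C (p + q)), Δ p q (r • x) = r • Δ p q x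
  Δ_rsmul : ∀ (p q : ℕ) (s : Rᵐᵒᵖ) (x : C (p + q)), Δ p q (s • x) = s • Δ p q x
  ε : C 0 ≃+ R
  ε_lsmul : ∀ (r : R) (x : C 0), ε (r • x) = r * ε x
  ε_rsmul : ∀ (s : Rᵐᵒᵖ) (x : C 0), ε (s • x) = ε x * s.unop
  counit_right : ∀ (n : ℕ) (x : C (n + 0)),
    rcollapse ε.toAddMonoidHom ε_lsmul (Δ n 0 x) = x
  counit_left : ∀ (n : ℕ) (x : C (0 + n)),
    lcollapse ε.toAddMonoidHom ε_rsmul (Δ 0 n x) = fcast C (Nat.zero_add n) x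
  grouplike : Δ 0 0 (ε.symm 1) = tp (ε.symm 1) (ε.symm 1)
  coassoc : ∀ (p q r : ℕ) (x : C (p + q + r)),
    assocT (mapT (Δ p q) (AddMonoidHom.id (C r))
        (fun s y => Δ_rsmul p q (op s) y) (fun _ _ => rfl)
      (Δ (p + q) r x))
    = mapT (AddMonoidHom.id (C p)) (Δ q r) (fun _ _ => rfl)
        (fun s y => Δ_lsmul q r s y)
      (Δ p (q + r) (fcast C (Nat.add_assoc p q r) x))

attribute [instance] ConnCoring.acg ConnCoring.modL ConnCoring.modR ConnCoring.scomm

variable {R}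

/-- A connected coring is strongly graded when all components of the
comultiplication are injective. -/
def ConnCoring.StronglyGraded (C : ConnCoring R) : Prop :=
  ∀ p q, Function.Injective (C.Δ p q)

/-- The element `1 ∈ R = C_0` of a connected coring. -/
def ConnCoring.one (C : ConnCoring R) : C.C 0 := C.ε.symm 1

/-- An element `x = ∑ₖ xₖ` of a connected coring (given by its homogeneous
components) is primitive if `Δ x = x ⊗ 1 + 1 ⊗ x`, written out componentwise. -/
def ConnCoring.IsPrimitive (C : ConnCoring R) (x : ⨁ n, C.C n) : Prop :=
  (C.Δ 0 0 (x 0) = tp (x 0) C.one + tp C.one (x 0)) ∧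
  (∀ k : ℕ, 0 < k → C.Δ k 0 (x (k + 0)) = tp (x k) C.one) ∧
  (∀ k : ℕ, 0 < k → C.Δ 0 k (x (0 + k)) = tp C.one (x k)) ∧
  (∀ p q : ℕ, 0 < p → 0 < q → C.Δ p q (x (p + q)) = 0)

/-- A morphism of connected graded `R`-corings. -/
structure CoringMor (C D : ConnCoring R) where
  f : ∀ n, C.C n →+ D.C n
  f_lsmul : ∀ (n : ℕ) (r : R) (x : C.C n), f n (r • x) = r • f n x
  f_rsmul : ∀ (n : ℕ) (s : Rᵐᵒᵖ) (x : C.C n), f n (s • x) = s • f n x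
  f_counit : ∀ x : C.C 0, D.ε (f 0 x) = C.ε x
  f_comul : ∀ (p q : ℕ) (x : C.C (p + q)),
    D.Δ p q (f (p + q) x)
      = mapT (f p) (f q) (fun s y => f_rsmul p (op s) y) (fun s y => f_lsmul q s y)
          (C.Δ p q x)

end Corings
--CHUNK_C_END


section SemisimpleOp


variable {R : Type} [Ring R]

/-- Left multiplication as a right-module (`Rᵐᵒᵖ`-linear) map. -/
def lmulOp (r : R) : R →ₗ[Rᵐᵒᵖ] R where
  toFun x := r * x
  map_add' := mul_add r
  map_smul' s x := by
    simp only [MulOpposite.smul_eq_mul_unop, RingHom.id_apply, mul_assoc]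

/-- The image of a simple submodule under a linear map is `⊥` or simple. -/
theorem map_simple_bot_or_simple {S : Type} [Ring S] {M N : Type} [AddCommGroup M]
    [AddCommGroup N] [Module S M] [Module S N] (f : M →ₗ[S] N) (E : Submodule S M)
    (hE : IsSimpleModule S E) :
    Submodule.map f E = ⊥ ∨ IsSimpleModule S (Submodule.map f E) := by
  have hrange : Submodule.map f E = LinearMap.range (f.comp E.subtype) := by
    rw [LinearMap.range_comp, Submodule.range_subtype]
  rcases eq_bot_or_eq_top (LinearMap.ker (f.comp E.subtype)) with hk | hk
  · right
    have hinj : Function.Injective (f.comp E.subtype) := LinearMap.ker_eq_bot.mp hk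
    rw [hrange]
    exact IsSimpleModule.congr (LinearEquiv.ofInjective _ hinj).symm
  · left
    rw [hrange, LinearMap.range_eq_bot.mpr (LinearMap.ker_eq_top.mp hk)]

variable (hR : IsSemisimpleRing R)

include hR in
/-- Von Neumann regularity of a semisimple ring. -/
theorem vnr (x : R) : ∃ y, x * y * x = x := by
  obtain ⟨e, he, hspan⟩ := IsSemisimpleRing.ideal_eq_span_idempotent (Ideal.span {x})
  have hx : x ∈ Ideal.span ({e} : Set R) := by
    rw [← hspan]; exact Ideal.subset_span rfl
  obtain ⟨a, ha⟩ := Submodule.mem_span_singleton.mp hx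
  have ha' : a * e = x := ha
  have hxe : x * e = x := by rw [← ha', mul_assoc, he.eq]
  have hex : e ∈ Ideal.span ({x} : Set R) := by
    rw [hspan]; exact Ideal.subset_span rfl
  obtain ⟨y, hy⟩ := Submodule.mem_span_singleton.mp hex
  have hy' : y * x = e := hy
  exact ⟨y, by rw [mul_assoc, hy', hxe]⟩

/-- In `eRe` (for `Re` a simple left ideal), nonzero elements have left inverses. -/
theorem eRe_left_inv {e : R} (he : e * e = e)
    (hs : IsSimpleModule R (Submodule.span R ({e} : Set R)))
    {a : R} (ha : e * a * e = a) (ha0 : a ≠ 0) :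
    ∃ b, e * b * e = b ∧ b * a = e := by
  have haMem : a ∈ Submodule.span R ({e} : Set R) :=
    Submodule.mem_span_singleton.mpr ⟨e * a, by rw [smul_eq_mul, ha]⟩
  have hle : Submodule.span R ({a} : Set R) ≤ Submodule.span R ({e} : Set R) :=
    Submodule.span_le.mpr (by simpa using haMem)
  have hAtom : IsAtom (Submodule.span R ({e} : Set R)) := isSimpleModule_iff_isAtom.mp hs
  have hnb : Submodule.span R ({a} : Set R) ≠ ⊥ := by
    intro h
    have : a ∈ Submodule.span R ({a} : Set R) := Submodule.mem_span_singleton_self a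
    rw [h] at this
    exact ha0 (by simpa using this)
  have heq : Submodule.span R ({a} : Set R) = Submodule.span R ({e} : Set R) :=
    ((hAtom.le_iff.mp hle).resolve_left hnb)
  have heMem : e ∈ Submodule.span R ({a} : Set R) := by
    rw [heq]; exact Submodule.mem_span_singleton_self e
  obtain ⟨r, hr⟩ := Submodule.mem_span_singleton.mp heMem
  have hr' : r * a = e := hr
  have hea : e * a = a := by
    calc e * a = e * (e * a * e) := by rw [ha]
      _ = (e * e) * a * e := by simp only [mul_assoc]
      _ = a := by rw [he, ha]
  refine ⟨e * r * e, ?_, ?_⟩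
  · calc e * (e * r * e) * e = (e * e) * r * (e * e) := by
          simp only [mul_assoc]
      _ = e * r * e := by rw [he]
  · calc (e * r * e) * a = (e * r) * (e * a) := by rw [mul_assoc, mul_assoc]
      _ = e * (r * a) := by rw [hea, mul_assoc]
      _ = e := by rw [hr', he]

include hR in
/-- If `Re` is a simple left ideal (`e` a nonzero idempotent), then `eR` is a simple
right ideal. -/
theorem eR_simple {e : R} (he : e * e = e) (he0 : e ≠ 0)
    (hs : IsSimpleModule R (Submodule.span R ({e} : Set R))) :
    IsSimpleModule Rᵐᵒᵖ (Submodule.span Rᵐᵒᵖ ({e} : Set R)) := by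
  rw [isSimpleModule_iff_isAtom]
  constructor
  · intro h
    have : e ∈ Submodule.span Rᵐᵒᵖ ({e} : Set R) := Submodule.mem_span_singleton_self e
    rw [h] at this
    exact he0 (by simpa using this)
  · intro N hN
    by_contra hNbot
    obtain ⟨x, hxN, hx0⟩ := Submodule.exists_mem_ne_zero_of_ne_bot hNbot
    have hxE : x ∈ Submodule.span Rᵐᵒᵖ ({e} : Set R) := hN.le hxN
    obtain ⟨t, ht⟩ := Submodule.mem_span_singleton.mp hxE
    have hex : e * x = x := by
      rw [← ht, MulOpposite.smul_eq_mul_unop, ← mul_assoc, he]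
    obtain ⟨y, hy⟩ := vnr hR x
    set d := x * y * e with hd
    have hed : e * d = d := by rw [hd, ← mul_assoc, ← mul_assoc, hex]
    have hde : d * e = d := by rw [hd, mul_assoc, mul_assoc, he, ← mul_assoc]
    have hded : e * d * e = d := by rw [hed, hde]
    have hd0 : d ≠ 0 := by
      intro h
      apply hx0
      have : d * x = x := by
        rw [hd, mul_assoc, hex, hy]
      rw [h, zero_mul] at this
      exact this.symm
    obtain ⟨b, hbe, hbd⟩ := eRe_left_inv he hs hded hd0
    have hb0 : b ≠ 0 := by
      intro h; rw [h, zero_mul] at hbd; exact he0 hbd.symm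
    obtain ⟨c, hce, hcb⟩ := eRe_left_inv he hs hbe hb0
    have heb : e * b = b := by
      calc e * b = e * (e * b * e) := by rw [hbe]
        _ = (e * e) * b * e := by simp only [mul_assoc]
        _ = b := by rw [he, hbe]
    have hcd : c = d := by
      calc c = c * e := by
              rw [← hce]; simp only [mul_assoc]; rw [he]
        _ = c * (b * d) := by rw [hbd]
        _ = (c * b) * d := by rw [mul_assoc]
        _ = e * d := by rw [hcb]
        _ = d := hed
    have hdb : d * b = e := by rw [← hcd, hcb]
    have heMem : e ∈ N := by
      rw [hd] at hdb
      have hxe' : x * (y * e * b) = e := by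
        calc x * (y * e * b) = x * y * e * b := by simp only [mul_assoc]
          _ = e := hdb
      rw [← hxe']
      exact N.smul_mem (op (y * e * b)) hxN
    have : Submodule.span Rᵐᵒᵖ ({e} : Set R) ≤ N :=
      Submodule.span_le.mpr (by simpa using heMem)
    exact hN.ne (le_antisymm hN.le this)

include hR in
/-- The opposite of a semisimple ring is semisimple. -/
theorem isSemisimpleRing_op : IsSemisimpleRing Rᵐᵒᵖ := by
  -- first: R is semisimple as a right module over itself (i.e. as an `Rᵐᵒᵖ`-module)
  haveI := hR
  have key : IsSemisimpleModule Rᵐᵒᵖ R := by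
    apply IsSemisimpleModule.of_sSup_simples_eq_top
    rw [eq_top_iff]
    intro x _
    -- x lies in the sup of all simple left ideals
    have hx : x ∈ sSup {m : Submodule R R | IsSimpleModule R m} := by
      haveI := hR
      rw [IsSemisimpleModule.sSup_simples_eq_top]; trivial
    rw [sSup_eq_iSup'] at hx
    set T : Submodule Rᵐᵒᵖ R := sSup {m : Submodule Rᵐᵒᵖ R | IsSimpleModule Rᵐᵒᵖ m} with hT
    show x ∈ T
    -- T is a left ideal (being a sum of simple right ideals)
    have hTleft : ∀ (r : R), ∀ z ∈ T, r * z ∈ T := by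
      intro r z hz
      have hmap : Submodule.map (lmulOp r) T ≤ T := by
        rw [hT, Submodule.map_le_iff_le_comap]
        apply sSup_le
        intro E hE
        rw [← Submodule.map_le_iff_le_comap]
        rcases map_simple_bot_or_simple (lmulOp r) E hE with h | h
        · rw [h]; exact bot_le
        · exact le_sSup h
      exact hmap ⟨z, hz, rfl⟩
    -- each simple left ideal is contained in T
    refine Submodule.iSup_induction
      (fun S : {m : Submodule R R | IsSimpleModule R m} => (S : Submodule R R))
      (motive := fun y => y ∈ T) hx ?_ (zero_mem T) (fun _ _ => add_mem)
    rintro ⟨S, hS⟩ y hyS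
    rcases eq_or_ne y 0 with rfl | hy0
    · exact zero_mem T
    -- span R {y} = S
    have hyle : Submodule.span R ({y} : Set R) ≤ S :=
      Submodule.span_le.mpr (by simpa using hyS)
    have hAtom : IsAtom S := isSimpleModule_iff_isAtom.mp hS
    have hynb : Submodule.span R ({y} : Set R) ≠ ⊥ := by
      intro h
      have : y ∈ Submodule.span R ({y} : Set R) := Submodule.mem_span_singleton_self y
      rw [h] at this
      exact hy0 (by simpa using this)
    have hyS' : Submodule.span R ({y} : Set R) = S :=
      (hAtom.le_iff.mp hyle).resolve_left hynb
    -- an idempotent generator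
    obtain ⟨e, he, hspan⟩ :=
      IsSemisimpleRing.ideal_eq_span_idempotent (Ideal.span ({y} : Set R))
    have hspan' : Submodule.span R ({e} : Set R) = S := by
      rw [← hyS']; exact hspan.symm
    have hy : y ∈ Ideal.span ({e} : Set R) := by
      rw [← hspan]; exact Ideal.subset_span rfl
    obtain ⟨a, ha⟩ := Submodule.mem_span_singleton.mp hy
    have ha' : a * e = y := ha
    have hye : y * e = y := by rw [← ha', mul_assoc, he.eq]
    have he0 : e ≠ 0 := by
      rintro rfl
      apply hy0
      rw [← ha', mul_zero]
    have hsimp : IsSimpleModule R (Submodule.span R ({e} : Set R)) := by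
      rw [hspan']; exact hS
    -- e generates a simple right ideal, hence e ∈ T; then y = y * e ∈ T
    have heT : e ∈ T := by
      have : Submodule.span Rᵐᵒᵖ ({e} : Set R) ≤ T :=
        le_sSup (eR_simple hR he.eq he0 hsimp)
      exact this (Submodule.mem_span_singleton_self e)
    rw [← hye]
    exact hTleft y e heT
  -- transfer along `unop : Rᵐᵒᵖ ≃ₗ[Rᵐᵒᵖ] R`
  let l : Rᵐᵒᵖ →ₗ[Rᵐᵒᵖ] R :=
    { toFun := unop
      map_add' := fun _ _ => rfl
      map_smul' := fun _ _ => rfl }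
  exact (l.isSemisimpleModule_iff_of_bijective unop_bijective).mpr key

end SemisimpleOp

section Retract


/-- Over a semisimple ring, any injective linear map admits a linear retraction. -/
theorem exists_retraction {S M N : Type} [Ring S] (hS : IsSemisimpleRing S)
    [AddCommGroup M] [AddCommGroup N] [Module S M] [Module S N]
    (f : M →ₗ[S] N) (hf : Function.Injective f) :
    ∃ g : N →ₗ[S] M, ∀ m, g (f m) = m := by
  haveI := hS
  obtain ⟨q, hq⟩ := exists_isCompl (LinearMap.range f)
  let π := Submodule.projectionOnto _ q hq
  let eqv := LinearEquiv.ofInjective f hf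
  refine ⟨eqv.symm.toLinearMap.comp π, fun m => ?_⟩
  have h1 : π (f m) = ⟨f m, LinearMap.mem_range_self f m⟩ := by
    have := Submodule.projectionOnto_apply_left hq
      (⟨f m, LinearMap.mem_range_self f m⟩ : LinearMap.range f)
    simpa using this
  have h2 : eqv.symm ⟨f m, LinearMap.mem_range_self f m⟩ = m := by
    rw [LinearEquiv.symm_apply_eq]
    exact Subtype.ext (LinearEquiv.ofInjective_apply f m).symm
  simp only [LinearMap.comp_apply, LinearEquiv.coe_coe, h1, h2]

end Retract

section MapTInj

theorem mapT_injective {R : Type} [Ring R] (hR : IsSemisimpleRing R)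
    {M N M' N' : Type} [AddCommGroup M] [AddCommGroup N] [AddCommGroup M'] [AddCommGroup N']
    [Module Rᵐᵒᵖ M] [Module R N] [Module Rᵐᵒᵖ M'] [Module R N']
    (f : M →+ M') (g : N →+ N')
    (hf : ∀ (r : R) (m : M), f (op r • m) = op r • f m)
    (hg : ∀ (r : R) (n : N), g (r • n) = r • g n)
    (hfi : Function.Injective f) (hgi : Function.Injective g) :
    Function.Injective (mapT f g hf hg) := by
  have hRop := isSemisimpleRing_op hR
  let F : M →ₗ[Rᵐᵒᵖ] M' :=
    { toFun := f, map_add' := f.map_add, map_smul' := fun s m => hf s.unop m }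
  let G : N →ₗ[R] N' :=
    { toFun := g, map_add' := g.map_add, map_smul' := fun r n => hg r n }
  obtain ⟨F', hF'⟩ := exists_retraction hRop F (fun a b hab => hfi hab)
  obtain ⟨G', hG'⟩ := exists_retraction hR G (fun a b hab => hgi hab)
  let h : TensorR R M' N' →+ TensorR R M N :=
    mapT F'.toAddMonoidHom G'.toAddMonoidHom
      (fun r m => F'.map_smul (op r) m) (fun r n => G'.map_smul r n)
  have hcomp : ∀ z, h (mapT f g hf hg z) = z := by
    intro z
    induction z using TensorR.ind with
    | h0 => simp
    | htp m n =>
        show tp (F' (f m)) (G' (g n)) = tp m n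
        rw [show F' (f m) = m from hF' m, show G' (g n) = n from hG' n]
    | hadd x y hx hy => rw [map_add, map_add, hx, hy]
  intro a b hab
  rw [← hcomp a, ← hcomp b, hab]

end MapTInj

/-- Let `R` be a semisimple ring, `C` a strongly graded connected
`R`-coring and `f : C → D` a morphism of connected graded `R`-corings whose
components `f_0` and `f_1` are injective.  Then `f` is injective. -/
theorem coring_mor_injective
    (R : Type) [Ring R] (hR : IsSemisimpleRing R) (C D : ConnCoring R)
    (hC : C.StronglyGraded) (f : CoringMor C D)
    (h0 : Function.Injective (f.f 0)) (h1 : Function.Injective (f.f 1)) :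
    ∀ n, Function.Injective (f.f n) := by
  intro n
  induction n with
  | zero => exact h0
  | succ m ih =>
      intro x y hxy
      apply hC m 1
      apply mapT_injective hR (f.f m) (f.f 1)
        (fun s y => f.f_rsmul m (op s) y) (fun s y => f.f_lsmul 1 s y) ih h1
      rw [← f.f_comul m 1 x, ← f.f_comul m 1 y, hxy]
end P1605
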